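/- Let C be an 11-cycle in a graph G with no 5-cycles, no 7-cycles, and no adjacent triangles, such that some edge of C lies in a triangle with apex inside. If a vertex y not on C and distinct from the apex has three neighbors z_1, z_2, z_3 on C, then C together with the edges yz_1, yz_2, yz_3 contains a 9-cycle separating the apex from the outside. -/

import Mathlib

set_option maxHeartbeats 1000000


open SimpleGraph

/-- `G` contains a cycle of length `n`. -/
def SimpleGraph.HasCycleLength {V : Type*} (G : SimpleGraph V) (n : ℕ) : Prop :=
  ∃ (v : V) (c : G.Walk v v), c.IsCycle ∧ c.length = n

/-- No two triangles of `G` share an edge: two triangles on a common edge `uv`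
must have the same apex. -/
def SimpleGraph.NoAdjacentTriangles {V : Type*} (G : SimpleGraph V) : Prop :=
  ∀ u v x y : V, G.Adj u v → G.Adj u x → G.Adj v x → G.Adj u y → G.Adj v y → x = y

/-- The consecutive pairs of a list, read cyclically. -/
def cyclicPairs {V : Type*} (l : List V) : List (V × V) := l.zip (l.rotate 1)

/-- A (combinatorial) plane graph: a finite connected simple graph together with a
finite set of faces, each face being given by its boundary closed walk, such that
every edge lies on exactly two face-incidences and Euler's formula holds. -/
structure PlaneGraph where
  V : Type
  [decV : DecidableEq V]
  [fintV : Fintype V]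
  G : SimpleGraph V
  F : Type
  [fintF : Fintype F]
  /-- the unbounded (outer) face -/
  outer : F
  /-- the closed boundary walk of each face, as a cyclic list of vertices -/
  boundary : F → List V
  boundary_adj : ∀ f, ∀ p ∈ cyclicPairs (boundary f), G.Adj p.1 p.2
  edge_faces : ∀ e ∈ G.edgeSet,
    (∑ f : F, ((cyclicPairs (boundary f)).map (fun p => s(p.1, p.2))).count e) = 2
  connected : G.Connected
  euler : (Fintype.card V : ℤ) - (G.edgeSet.ncard : ℤ) + (Fintype.card F : ℤ) = 2

attribute [instance] PlaneGraph.decV PlaneGraph.fintV PlaneGraph.fintF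

/-- `|V(G)| + |E(G)|`. -/
noncomputable def PlaneGraph.size (P : PlaneGraph) : ℕ := Nat.card P.V + P.G.edgeSet.ncard

/-- The degree of a face: the length of its boundary walk. -/
def PlaneGraph.faceDegree (P : PlaneGraph) (f : P.F) : ℕ := (P.boundary f).length

/-- The (multi)set of edges on the boundary of a face. -/
def PlaneGraph.faceEdges (P : PlaneGraph) (f : P.F) : List (Sym2 P.V) :=
  (cyclicPairs (P.boundary f)).map (fun p => s(p.1, p.2))

/-- The class 𝓖: no 5-cycles, no 7-cycles, no adjacent triangles. -/
def PlaneGraph.Good (P : PlaneGraph) : Prop :=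
  ¬ P.G.HasCycleLength 5 ∧ ¬ P.G.HasCycleLength 7 ∧ P.G.NoAdjacentTriangles

/-- A map `φ` is a proper 3-coloring of (the boundary of) the face `f`. -/
def PlaneGraph.ProperOn (P : PlaneGraph) (φ : P.V → Fin 3) (f : P.F) : Prop :=
  ∀ p ∈ cyclicPairs (P.boundary f), φ p.1 ≠ φ p.2

/-- The precoloring `φ` of the face `f` extends to a proper 3-coloring of the
whole graph. -/
def PlaneGraph.Extends (P : PlaneGraph) (φ : P.V → Fin 3) (f : P.F) : Prop :=
  ∃ ψ : P.V → Fin 3, (∀ a b, P.G.Adj a b → ψ a ≠ ψ b) ∧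
    ∀ v ∈ P.boundary f, ψ v = φ v

/-- A special 11-face: its boundary is an 11-cycle, it is adjacent to a triangle
sharing one edge with it, no vertex off the boundary has three or more neighbors
on it (no claw-center), and no adjacent pair of vertices off the boundary has
four or more neighbors on it in total (no d-claw-center). -/
def PlaneGraph.SpecialFace (P : PlaneGraph) (f : P.F) : Prop :=
  (P.boundary f).Nodup ∧ (P.boundary f).length = 11 ∧
  (∃ x u v, x ∉ P.boundary f ∧ s(u, v) ∈ P.faceEdges f ∧
    P.G.Adj x u ∧ P.G.Adj x v) ∧
  (∀ x, x ∉ P.boundary f → {v | v ∈ P.boundary f ∧ P.G.Adj x v}.ncard ≤ 2) ∧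
  (∀ x y, x ∉ P.boundary f → y ∉ P.boundary f → P.G.Adj x y →
    {v | v ∈ P.boundary f ∧ P.G.Adj x v}.ncard +
      {v | v ∈ P.boundary f ∧ P.G.Adj y v}.ncard ≤ 3)

/-- A face of the kind considered in the main theorem: a 3-face or a 9-face
bounded by a cycle, or a special 11-face. -/
def PlaneGraph.AllowedFace (P : PlaneGraph) (f : P.F) : Prop :=
  ((P.boundary f).Nodup ∧ ((P.boundary f).length = 3 ∨ (P.boundary f).length = 9))
    ∨ P.SpecialFace f

/-- `(P, f, φ)` is a counterexample to the extension theorem. -/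
def PlaneGraph.Counterexample (P : PlaneGraph) (f : P.F) (φ : P.V → Fin 3) : Prop :=
  P.Good ∧ (P.G.HasCycleLength 4 ∨ P.G.HasCycleLength 6) ∧ P.AllowedFace f ∧
    P.ProperOn φ f ∧ ¬ P.Extends φ f

/-- A counterexample minimizing `|V| + |E|`. -/
def PlaneGraph.MinimalCounterexample (P : PlaneGraph) (f : P.F) (φ : P.V → Fin 3) :
    Prop :=
  P.Counterexample f φ ∧
    ∀ (Q : PlaneGraph) (g : Q.F) (ψ : Q.V → Fin 3),
      Q.Counterexample g ψ → P.size ≤ Q.size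

/-- The boundary cycle of `f` has no chord: any edge between boundary vertices
is a boundary edge. -/
def PlaneGraph.Chordless (P : PlaneGraph) (f : P.F) : Prop :=
  ∀ u v, u ∈ P.boundary f → v ∈ P.boundary f → P.G.Adj u v →
    s(u, v) ∈ P.faceEdges f

/-- 2-connectedness. -/
def SimpleGraph.TwoConnected {V : Type*} (G : SimpleGraph V) : Prop :=
  3 ≤ Nat.card V ∧ ∀ v : V, ((⊤ : G.Subgraph).deleteVerts {v}).coe.Connected

section AuxClaw

variable {V : Type*} {G : SimpleGraph V}

lemma adj_of_walk_length_one {u v : V} (p : G.Walk u v) (h : p.length = 1) : G.Adj u v := by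
  cases p with
  | nil => simp at h
  | cons h' p' =>
    cases p' with
    | nil => exact h'
    | cons h'' p'' => simp [Walk.length_cons] at h

lemma walk_two_decomp {u v : V} (p : G.Walk u v) (h : p.length = 2) :
    ∃ (m : V) (h1 : G.Adj u m) (h2 : G.Adj m v),
      p = Walk.cons h1 (Walk.cons h2 Walk.nil) := by
  cases p with
  | nil => simp at h
  | cons h1 p' =>
    cases p' with
    | nil => simp at h
    | cons h2 p'' =>
      cases p'' with
      | nil => exact ⟨_, h1, h2, rfl⟩
      | cons h3 p''' => simp [Walk.length_cons] at h

lemma path_of_cycle_append_left {s t : V} {p : G.Walk s t} {q : G.Walk t s}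
    (hst : s ≠ t) (h : (p.append q).IsCycle) : p.IsPath := by
  have hnd := h.2
  rw [Walk.support_append] at hnd
  rw [Walk.support_eq_cons p, List.cons_append, List.tail_cons] at hnd
  have hs : s ∈ q.support.tail := Walk.end_mem_tail_support_of_ne (Ne.symm hst) q
  rw [Walk.isPath_def, Walk.support_eq_cons, List.nodup_cons]
  have := List.nodup_append'.mp hnd
  exact ⟨fun hc => (this.2.2 hc hs), this.1⟩

lemma cycle_append_comm {s t : V} {p : G.Walk s t} {q : G.Walk t s}
    (h : (p.append q).IsCycle) : (q.append p).IsCycle := by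
  rw [Walk.isCycle_def, Walk.isTrail_def] at h ⊢
  obtain ⟨hedges, hnil, hnd⟩ := h
  refine ⟨?_, ?_, ?_⟩
  · rw [Walk.edges_append] at hedges ⊢
    exact (List.perm_append_comm).nodup hedges
  · intro hc
    have := congrArg Walk.length hc
    rw [Walk.length_append] at this
    simp only [Walk.length_nil] at this
    apply hnil
    cases q with
    | nil => cases p with
      | nil => rfl
      | cons h' p' => simp [Walk.length_cons] at this
    | cons h' q' => simp [Walk.length_cons] at this
  · have hh : (p.append q).support.tail = p.support.tail ++ q.support.tail := by
      rw [Walk.support_append, Walk.support_eq_cons p, List.cons_append, List.tail_cons]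
      rfl
    have hg : (q.append p).support.tail = q.support.tail ++ p.support.tail := by
      rw [Walk.support_append, Walk.support_eq_cons q, List.cons_append, List.tail_cons]
      rfl
    rw [hh] at hnd
    rw [hg]
    exact (List.perm_append_comm).nodup hnd


lemma build_cycle {y s t : V} (A : G.Walk s t) (hA : A.IsPath) (hst : s ≠ t)
    (hys : G.Adj y s) (hyt : G.Adj y t) (hy : y ∉ A.support) :
    ∃ c' : G.Walk y y, c'.IsCycle ∧ c'.length = A.length + 2 ∧
      c'.support = y :: (A.support.concat y) ∧
      c'.edges = s(y,s) :: (A.edges.concat s(t,y)) := by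
  refine ⟨Walk.cons hys (A.concat hyt.symm), ?_, ?_, ?_, ?_⟩
  · rw [Walk.cons_isCycle_iff]
    constructor
    · rw [Walk.isPath_def, Walk.support_concat,
        List.nodup_append']
      exact ⟨hA.support_nodup, List.nodup_singleton y,
        fun w hw hw' => by simp at hw'; subst hw'; exact hy hw⟩
    · rw [Walk.edges_concat, List.concat_eq_append, List.mem_append]
      rintro (h | h)
      · exact hy (A.fst_mem_support_of_mem_edges h)
      · simp only [List.mem_singleton, Sym2.eq_iff] at h
        rcases h with ⟨h1, h2⟩ | ⟨h1, h2⟩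
        · subst h1; exact hy A.end_mem_support
        · exact hst h2
  · simp [Walk.length_concat]
  · simp [Walk.support_concat]
  · simp [Walk.edges_concat]

lemma pentagon {x a y b m : V} (e1 : G.Adj x a) (e2 : G.Adj a y) (e3 : G.Adj y b)
    (e4 : G.Adj b m) (e5 : G.Adj m x)
    (hxa : x ≠ a) (hxy : x ≠ y) (hxb : x ≠ b) (hxm : x ≠ m)
    (hay : a ≠ y) (hab : a ≠ b) (ham : a ≠ m)
    (hyb : y ≠ b) (hym : y ≠ m) (hbm : b ≠ m) : G.HasCycleLength 5 := by
  refine ⟨x, Walk.cons e1 (Walk.cons e2 (Walk.cons e3 (Walk.cons e4 (Walk.cons e5 Walk.nil)))), ?_, rfl⟩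
  rw [Walk.cons_isCycle_iff]
  constructor
  · simp only [Walk.cons_isPath_iff, Walk.isPath_def, Walk.support_nil, Walk.support_cons,
      List.mem_cons, List.mem_singleton, List.not_mem_nil]
    simp_all
    tauto
  · simp only [Walk.edges_cons, Walk.edges_nil, List.mem_cons, List.not_mem_nil, Sym2.eq_iff]
    tauto

lemma closed_start_mem_tail {a : V} (c : G.Walk a a) (hn : c ≠ Walk.nil) :
    a ∈ c.support.tail := by
  cases c with
  | nil => exact absurd rfl hn
  | cons h q => simpa using q.end_mem_support

variable [DecidableEq V]

lemma length_rotate' {a b : V} (c : G.Walk a a) (h : b ∈ c.support) :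
    (c.rotate b h).length = c.length := by
  have := congrArg Walk.length (c.take_spec h)
  rw [Walk.length_append] at this
  rw [Walk.rotate, Walk.length_append]
  omega

lemma mem_support_rotate_iff {a b w : V} (c : G.Walk a a) (hn : c ≠ Walk.nil)
    (h : b ∈ c.support) : w ∈ (c.rotate b h).support ↔ w ∈ c.support := by
  have hr := Walk.support_rotate c b h
  have hrn : (c.rotate b h) ≠ Walk.nil := by
    intro hc
    have := congrArg Walk.length hc
    rw [length_rotate' c h] at this
    simp only [Walk.length_nil] at this
    cases c with
    | nil => exact hn rfl
    | cons h' q => simp [Walk.length_cons] at this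
  constructor
  · intro hw
    rcases (Walk.support_eq_cons (c.rotate b h)) ▸ hw with hw
    rw [List.mem_cons] at hw
    rcases hw with rfl | hw
    · exact h
    · exact List.mem_of_mem_tail (hr.mem_iff.mp hw)
  · intro hw
    rcases List.mem_cons.mp ((Walk.support_eq_cons c) ▸ hw) with rfl | hw
    · exact List.mem_of_mem_tail (hr.mem_iff.mpr (closed_start_mem_tail c hn))
    · exact List.mem_of_mem_tail (hr.mem_iff.mpr hw)

lemma mem_edges_rotate_iff {a b : V} (c : G.Walk a a) (h : b ∈ c.support) {e : Sym2 V} :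
    e ∈ (c.rotate b h).edges ↔ e ∈ c.edges := (Walk.rotate_edges c b h).mem_iff


lemma arith_cases (la lb lc : ℕ) (h : la + lb + lc = 11)
    (ha1 : 1 ≤ la) (hb1 : 1 ≤ lb) (hc1 : 1 ≤ lc)
    (cA1 : la + 2 ≠ 5) (cA2 : la + 2 ≠ 7) (cB1 : lb + 2 ≠ 5) (cB2 : lb + 2 ≠ 7)
    (cC1 : lc + 2 ≠ 5) (cC2 : lc + 2 ≠ 7)
    (cBC1 : lb + lc + 2 ≠ 5) (cBC2 : lb + lc + 2 ≠ 7)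
    (cCA1 : lc + la + 2 ≠ 5) (cCA2 : lc + la + 2 ≠ 7)
    (cAB1 : la + lb + 2 ≠ 5) (cAB2 : la + lb + 2 ≠ 7) :
    (la = 1 ∧ lb = 1) ∨ (la = 1 ∧ lc = 1) ∨ (lb = 1 ∧ lc = 1) ∨
      (la = 7 ∧ lb = 2 ∧ lc = 2) ∨ (la = 2 ∧ lb = 7 ∧ lc = 2) ∨
      (la = 2 ∧ lb = 2 ∧ lc = 7) := by omega

lemma con' {y : V} (h5 : ¬ G.HasCycleLength 5) (h7 : ¬ G.HasCycleLength 7)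
    {s t : V} (W : G.Walk s t) (hW : W.IsPath) (hst : s ≠ t)
    (h1 : G.Adj y s) (h2 : G.Adj y t) (hyW : y ∉ W.support) :
    W.length + 2 ≠ 5 ∧ W.length + 2 ≠ 7 := by
  obtain ⟨c', hc', hl, -, -⟩ := build_cycle W hW hst h1 h2 hyW
  constructor <;> intro hEq
  · exact h5 ⟨y, c', hc', by omega⟩
  · exact h7 ⟨y, c', hc', by omega⟩

lemma contra2' (h5 : ¬ G.HasCycleLength 5) {x y u v s t : V} (W : G.Walk s t)
    (hW : W.IsPath) (hl2 : W.length = 2) (hst : s ≠ t)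
    (h1 : G.Adj y s) (h2 : G.Adj y t)
    (hxu : G.Adj x u) (hxv : G.Adj x v)
    (hxW : x ∉ W.support) (hyW : y ∉ W.support) (hyx : y ≠ x)
    (he : s(u,v) ∈ W.edges) : False := by
  obtain ⟨m, e1, e2, rfl⟩ := walk_two_decomp W hl2
  have hsupp : (Walk.cons e1 (Walk.cons e2 Walk.nil)).support = [s, m, t] := by simp
  rw [hsupp] at hxW hyW
  simp only [List.mem_cons, List.mem_singleton, List.not_mem_nil, or_false, not_or] at hxW hyW
  obtain ⟨hxs, hxm, hxt⟩ := hxW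
  obtain ⟨hys', hym, hyt'⟩ := hyW
  have hnd := hW.support_nodup
  rw [hsupp] at hnd
  simp only [List.nodup_cons, List.mem_cons, List.mem_singleton, List.not_mem_nil,
    or_false, List.nodup_nil, and_true] at hnd
  have hsm : s ≠ m := fun h => hnd.1 (Or.inl h)
  have hmt : m ≠ t := hnd.2.1
  simp only [Walk.edges_cons, Walk.edges_nil, List.mem_cons, List.not_mem_nil, or_false] at he
  rcases he with he | he
  · have hxs' : G.Adj x s ∧ G.Adj x m := by
      rw [Sym2.eq_iff] at he
      rcases he with ⟨rfl, rfl⟩ | ⟨rfl, rfl⟩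
      · exact ⟨hxu, hxv⟩
      · exact ⟨hxv, hxu⟩
    exact h5 (pentagon hxs'.1 h1.symm h2 e2.symm hxs'.2.symm
      hxs hyx.symm hxt hxm (fun h => hys' h.symm) hst hsm hyt' hym hmt.symm)
  · have hxs' : G.Adj x m ∧ G.Adj x t := by
      rw [Sym2.eq_iff] at he
      rcases he with ⟨rfl, rfl⟩ | ⟨rfl, rfl⟩
      · exact ⟨hxu, hxv⟩
      · exact ⟨hxv, hxu⟩
    exact h5 (pentagon hxs'.2 h2.symm h1 e1 hxs'.1.symm
      hxt hyx.symm hxs hxm (fun h => hyt' h.symm) hst.symm hmt.symm hys' hym hsm)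

lemma fin' {a u v y w₁ w₂ w₃ : V} (c : G.Walk a a)
    {s t : V} (W : G.Walk s t) (hW : W.IsPath) (hl7 : W.length = 7)
    (hWs : ∀ w ∈ W.support, w ∈ c.support) (hWe : ∀ e ∈ W.edges, e ∈ c.edges)
    (hst : s ≠ t) (h1 : G.Adj y s) (h2 : G.Adj y t) (hy : y ∉ c.support)
    (he : s(u,v) ∈ W.edges)
    (hs3 : s = w₁ ∨ s = w₂ ∨ s = w₃) (ht3 : t = w₁ ∨ t = w₂ ∨ t = w₃) :
    ∃ (b : V) (c' : G.Walk b b), c'.IsCycle ∧ c'.length = 9 ∧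
      y ∈ c'.support ∧ s(u,v) ∈ c'.edges ∧
      (∀ w ∈ c'.support, w = y ∨ w ∈ c.support) ∧
      (∀ e ∈ c'.edges, e ∈ c.edges ∨ e = s(y,w₁) ∨ e = s(y,w₂) ∨ e = s(y,w₃)) := by
  have hyW : y ∉ W.support := fun h => hy (hWs _ h)
  obtain ⟨c', hc', hl, hsup, hedg⟩ := build_cycle W hW hst h1 h2 hyW
  refine ⟨y, c', hc', by omega, by rw [hsup]; exact List.mem_cons_self, ?_, ?_, ?_⟩
  · rw [hedg]
    exact List.mem_cons_of_mem _ (by rw [List.concat_eq_append, List.mem_append]; exact Or.inl he)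
  · intro w hw
    rw [hsup, List.mem_cons, List.concat_eq_append, List.mem_append, List.mem_singleton] at hw
    rcases hw with rfl | hw | rfl
    · exact Or.inl rfl
    · exact Or.inr (hWs _ hw)
    · exact Or.inl rfl
  · intro e hee
    rw [hedg, List.mem_cons, List.concat_eq_append, List.mem_append, List.mem_singleton] at hee
    rcases hee with rfl | hee | rfl
    · rcases hs3 with rfl | rfl | rfl
      · exact Or.inr (Or.inl rfl)
      · exact Or.inr (Or.inr (Or.inl rfl))
      · exact Or.inr (Or.inr (Or.inr rfl))
    · exact Or.inl (hWe _ hee)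
    · rw [Sym2.eq_swap]
      rcases ht3 with rfl | rfl | rfl
      · exact Or.inr (Or.inl rfl)
      · exact Or.inr (Or.inr (Or.inl rfl))
      · exact Or.inr (Or.inr (Or.inr rfl))

lemma key {a u v x y w₁ w₂ w₃ : V}
    (h5 : ¬ G.HasCycleLength 5) (h7 : ¬ G.HasCycleLength 7)
    (hT : G.NoAdjacentTriangles)
    (c : G.Walk a a) (h11 : c.length = 11)
    (hxu : G.Adj x u) (hxv : G.Adj x v)
    (hx : x ∉ c.support) (hy : y ∉ c.support) (hyx : y ≠ x)
    (hw12 : w₁ ≠ w₂) (hw13 : w₁ ≠ w₃) (hw23 : w₂ ≠ w₃)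
    (hyw₁ : G.Adj y w₁) (hyw₂ : G.Adj y w₂) (hyw₃ : G.Adj y w₃)
    (A : G.Walk w₁ w₂) (B : G.Walk w₂ w₃) (C : G.Walk w₃ w₁)
    (hA : A.IsPath) (hB : B.IsPath) (hC : C.IsPath)
    (hAB : (A.append B).IsPath) (hBC : (B.append C).IsPath) (hCA : (C.append A).IsPath)
    (hlen : A.length + B.length + C.length = 11)
    (hAs : ∀ w ∈ A.support, w ∈ c.support) (hBs : ∀ w ∈ B.support, w ∈ c.support)
    (hCs : ∀ w ∈ C.support, w ∈ c.support)
    (hAe : ∀ e ∈ A.edges, e ∈ c.edges) (hBe : ∀ e ∈ B.edges, e ∈ c.edges)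
    (hCe : ∀ e ∈ C.edges, e ∈ c.edges)
    (huv : s(u,v) ∈ A.edges ∨ s(u,v) ∈ B.edges ∨ s(u,v) ∈ C.edges) :
    ∃ (b : V) (c' : G.Walk b b), c'.IsCycle ∧ c'.length = 9 ∧
      y ∈ c'.support ∧ s(u,v) ∈ c'.edges ∧
      (∀ w ∈ c'.support, w = y ∨ w ∈ c.support) ∧
      (∀ e ∈ c'.edges, e ∈ c.edges ∨ e = s(y,w₁) ∨ e = s(y,w₂) ∨ e = s(y,w₃)) := by
  have hyA : y ∉ A.support := fun h => hy (hAs _ h)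
  have hyB : y ∉ B.support := fun h => hy (hBs _ h)
  have hyC : y ∉ C.support := fun h => hy (hCs _ h)
  have cA := con' h5 h7 A hA hw12 hyw₁ hyw₂ hyA
  have cB := con' h5 h7 B hB hw23 hyw₂ hyw₃ hyB
  have cC := con' h5 h7 C hC hw13.symm hyw₃ hyw₁ hyC
  have cBC := con' h5 h7 (B.append C) hBC hw12.symm hyw₂ hyw₁
    (by rw [Walk.mem_support_append_iff]; rintro (h | h) <;> [exact hyB h; exact hyC h])
  have cCA := con' h5 h7 (C.append A) hCA hw23.symm hyw₃ hyw₂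
    (by rw [Walk.mem_support_append_iff]; rintro (h | h) <;> [exact hyC h; exact hyA h])
  have cAB := con' h5 h7 (A.append B) hAB hw13 hyw₁ hyw₃
    (by rw [Walk.mem_support_append_iff]; rintro (h | h) <;> [exact hyA h; exact hyB h])
  rw [Walk.length_append] at cBC cCA cAB
  have la1 : 1 ≤ A.length := by
    rcases Nat.eq_zero_or_pos A.length with h | h
    · exact absurd (Walk.eq_of_length_eq_zero h) hw12
    · exact h
  have lb1 : 1 ≤ B.length := by
    rcases Nat.eq_zero_or_pos B.length with h | h
    · exact absurd (Walk.eq_of_length_eq_zero h) hw23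
    · exact h
  have lc1 : 1 ≤ C.length := by
    rcases Nat.eq_zero_or_pos C.length with h | h
    · exact absurd (Walk.eq_of_length_eq_zero h) hw13.symm
    · exact h
  have hxA : x ∉ A.support := fun h => hx (hAs _ h)
  have hxB : x ∉ B.support := fun h => hx (hBs _ h)
  have hxC : x ∉ C.support := fun h => hx (hCs _ h)
  have hcases := arith_cases A.length B.length C.length hlen la1 lb1 lc1
    cA.1 cA.2 cB.1 cB.2 cC.1 cC.2 cBC.1 cBC.2 cCA.1 cCA.2 cAB.1 cAB.2
  rcases hcases with ⟨ha, hb⟩ | ⟨ha, hc⟩ | ⟨hb, hc⟩ | ⟨ha, hb, hc⟩ | ⟨ha, hb, hc⟩ | ⟨ha, hb, hc⟩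
  · exact absurd (hT y w₂ w₁ w₃ hyw₂ hyw₁ (adj_of_walk_length_one A ha).symm hyw₃
      (adj_of_walk_length_one B hb)) hw13
  · exact absurd (hT y w₁ w₂ w₃ hyw₁ hyw₂ (adj_of_walk_length_one A ha) hyw₃
      (adj_of_walk_length_one C hc).symm) hw23
  · exact absurd (hT y w₃ w₂ w₁ hyw₃ hyw₂ (adj_of_walk_length_one B hb).symm hyw₁
      (adj_of_walk_length_one C hc)) hw12.symm
  · rcases huv with he | he | he
    · exact fin' c A hA ha hAs hAe hw12 hyw₁ hyw₂ hy he (Or.inl rfl) (Or.inr (Or.inl rfl))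
    · exact (contra2' h5 B hB hb hw23 hyw₂ hyw₃ hxu hxv hxB hyB hyx he).elim
    · exact (contra2' h5 C hC hc hw13.symm hyw₃ hyw₁ hxu hxv hxC hyC hyx he).elim
  · rcases huv with he | he | he
    · exact (contra2' h5 A hA ha hw12 hyw₁ hyw₂ hxu hxv hxA hyA hyx he).elim
    · exact fin' c B hB hb hBs hBe hw23 hyw₂ hyw₃ hy he (Or.inr (Or.inl rfl)) (Or.inr (Or.inr rfl))
    · exact (contra2' h5 C hC hc hw13.symm hyw₃ hyw₁ hxu hxv hxC hyC hyx he).elim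
  · rcases huv with he | he | he
    · exact (contra2' h5 A hA ha hw12 hyw₁ hyw₂ hxu hxv hxA hyA hyx he).elim
    · exact (contra2' h5 B hB hb hw23 hyw₂ hyw₃ hxu hxv hxB hyB hyx he).elim
    · exact fin' c C hC hc hCs hCe hw13.symm hyw₃ hyw₁ hy he (Or.inr (Or.inr rfl)) (Or.inl rfl)


end AuxClaw

/-- Let C be an 11-cycle in a plane graph with no 5-cycles, no
7-cycles and no adjacent triangles, some edge uv of which lies on a triangle uvx
with apex x inside (off C). If a vertex y off C, distinct from x, has three
neighbors z₁, z₂, z₃ on C, then C together with the edges yz₁, yz₂, yz₃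
contains a 9-cycle separating the apex from the outside (a 9-cycle through y
whose other edges come from C and the edges yzᵢ, and which has the edge uv on
its boundary, hence x in its interior). -/
theorem claw_on_11cycle_yields_separating_9cycle
    (P : PlaneGraph)
    (h5 : ¬ P.G.HasCycleLength 5) (h7 : ¬ P.G.HasCycleLength 7)
    (hT : P.G.NoAdjacentTriangles)
    {a : P.V} (c : P.G.Walk a a) (hc : c.IsCycle) (h11 : c.length = 11)
    {u v x : P.V} (huv : s(u, v) ∈ c.edges) (hx : x ∉ c.support)
    (hxu : P.G.Adj x u) (hxv : P.G.Adj x v)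
    {y z₁ z₂ z₃ : P.V} (hy : y ∉ c.support) (hyx : y ≠ x)
    (hz₁ : z₁ ∈ c.support) (hz₂ : z₂ ∈ c.support) (hz₃ : z₃ ∈ c.support)
    (h12 : z₁ ≠ z₂) (h13 : z₁ ≠ z₃) (h23 : z₂ ≠ z₃)
    (hyz₁ : P.G.Adj y z₁) (hyz₂ : P.G.Adj y z₂) (hyz₃ : P.G.Adj y z₃) :
    ∃ (b : P.V) (c' : P.G.Walk b b), c'.IsCycle ∧ c'.length = 9 ∧
      y ∈ c'.support ∧ s(u, v) ∈ c'.edges ∧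
      (∀ w ∈ c'.support, w = y ∨ w ∈ c.support) ∧
      (∀ e ∈ c'.edges, e ∈ c.edges ∨ e = s(y, z₁) ∨
        e = s(y, z₂) ∨ e = s(y, z₃)) := by
  have hcnil : c ≠ Walk.nil := hc.ne_nil
  have hc₁ : (c.rotate z₁ hz₁).IsCycle := hc.rotate hz₁
  have hlen₁ : (c.rotate z₁ hz₁).length = 11 := by rw [length_rotate' c hz₁, h11]
  have hm : ∀ w : P.V, w ∈ (c.rotate z₁ hz₁).support ↔ w ∈ c.support :=
    fun w => mem_support_rotate_iff c hcnil hz₁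
  have hme : ∀ e : Sym2 P.V, e ∈ (c.rotate z₁ hz₁).edges ↔ e ∈ c.edges :=
    fun e => mem_edges_rotate_iff c hz₁
  have hz₂' : z₂ ∈ (c.rotate z₁ hz₁).support := (hm z₂).mpr hz₂
  set p := (c.rotate z₁ hz₁).takeUntil z₂ hz₂' with hpdef
  set q := (c.rotate z₁ hz₁).dropUntil z₂ hz₂' with hqdef
  have hspec : p.append q = c.rotate z₁ hz₁ := (c.rotate z₁ hz₁).take_spec hz₂'
  have hcyc : (p.append q).IsCycle := by rw [hspec]; exact hc₁
  have hpP : p.IsPath := path_of_cycle_append_left h12 hcyc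
  have hqP : q.IsPath := path_of_cycle_append_left (fun h => h12 h.symm) (cycle_append_comm hcyc)
  have hlpq : p.length + q.length = 11 := by
    have h := congrArg Walk.length hspec
    rw [Walk.length_append] at h
    omega
  have hpS : ∀ w ∈ p.support, w ∈ c.support :=
    fun w h => (hm w).mp (Walk.support_takeUntil_subset _ _ h)
  have hqS : ∀ w ∈ q.support, w ∈ c.support :=
    fun w h => (hm w).mp (Walk.support_dropUntil_subset _ _ h)
  have hpE : ∀ e ∈ p.edges, e ∈ c.edges :=
    fun e h => (hme e).mp (Walk.edges_takeUntil_subset _ _ h)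
  have hqE : ∀ e ∈ q.edges, e ∈ c.edges :=
    fun e h => (hme e).mp (Walk.edges_dropUntil_subset _ _ h)
  have huv₁ : s(u, v) ∈ p.edges ∨ s(u, v) ∈ q.edges := by
    have h : s(u, v) ∈ (c.rotate z₁ hz₁).edges := (hme _).mpr huv
    rw [← hspec, Walk.edges_append, List.mem_append] at h
    exact h
  have hz₃' : z₃ ∈ (c.rotate z₁ hz₁).support := (hm z₃).mpr hz₃
  rw [← hspec, Walk.mem_support_append_iff] at hz₃'
  rcases hz₃' with h3p | h3q
  · -- z₃ on the arc p from z₁ to z₂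
    set p₁ := p.takeUntil z₃ h3p with hp₁def
    set p₂ := p.dropUntil z₃ h3p with hp₂def
    have hsp : p₁.append p₂ = p := p.take_spec h3p
    have hp₁ : p₁.IsPath := hpP.takeUntil h3p
    have hp₂ : p₂.IsPath := hpP.dropUntil h3p
    have hAB : (p₁.append p₂).IsPath := by rw [hsp]; exact hpP
    have hcyc' : (p₁.append (p₂.append q)).IsCycle := by
      rw [Walk.append_assoc, hsp]; exact hcyc
    have hBC : (p₂.append q).IsPath :=
      path_of_cycle_append_left (fun h => h13 h.symm) (cycle_append_comm hcyc')
    have hCA : (q.append p₁).IsPath := by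
      have h1 : (q.append p).IsCycle := cycle_append_comm hcyc
      have h2 : ((q.append p₁).append p₂).IsCycle := by
        rw [← Walk.append_assoc, hsp]; exact h1
      exact path_of_cycle_append_left h23 h2
    have hlsp : p₁.length + p₂.length = p.length := by
      have h := congrArg Walk.length hsp
      rw [Walk.length_append] at h
      exact h
    have hp₁S : ∀ w ∈ p₁.support, w ∈ c.support :=
      fun w h => hpS w (Walk.support_takeUntil_subset _ _ h)
    have hp₂S : ∀ w ∈ p₂.support, w ∈ c.support :=
      fun w h => hpS w (Walk.support_dropUntil_subset _ _ h)
    have hp₁E : ∀ e ∈ p₁.edges, e ∈ c.edges :=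
      fun e h => hpE e (Walk.edges_takeUntil_subset _ _ h)
    have hp₂E : ∀ e ∈ p₂.edges, e ∈ c.edges :=
      fun e h => hpE e (Walk.edges_dropUntil_subset _ _ h)
    have huv₂ : s(u, v) ∈ p₁.edges ∨ s(u, v) ∈ p₂.edges ∨
        s(u, v) ∈ q.edges := by
      rcases huv₁ with h | h
      · rw [← hsp, Walk.edges_append, List.mem_append] at h
        tauto
      · tauto
    obtain ⟨b, c', hh1, hh2, hh3, hh4, hh5, hh6⟩ :=
      key h5 h7 hT c h11 hxu hxv hx hy hyx h13 h12 (fun h => h23 h.symm)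
        hyz₁ hyz₃ hyz₂ p₁ p₂ q hp₁ hp₂ hqP hAB hBC hCA (by omega)
        hp₁S hp₂S hqS hp₁E hp₂E hqE huv₂
    exact ⟨b, c', hh1, hh2, hh3, hh4, hh5, fun e he => by rcases hh6 e he with h|h|h|h <;> tauto⟩
  · -- z₃ on the arc q from z₂ to z₁
    have h3q' : z₃ ∈ q.support := h3q
    set q₁ := q.takeUntil z₃ h3q' with hq₁def
    set q₂ := q.dropUntil z₃ h3q' with hq₂def
    have hsq : q₁.append q₂ = q := q.take_spec h3q'
    have hq₁ : q₁.IsPath := hqP.takeUntil h3q'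
    have hq₂ : q₂.IsPath := hqP.dropUntil h3q'
    have hBC : (q₁.append q₂).IsPath := by rw [hsq]; exact hqP
    have hcyc' : (p.append (q₁.append q₂)).IsCycle := by rw [hsq]; exact hcyc
    have hAB : (p.append q₁).IsPath := by
      have h2 : ((p.append q₁).append q₂).IsCycle := by
        rw [← Walk.append_assoc, hsq]; exact hcyc
      exact path_of_cycle_append_left h13 h2
    have hCA : (q₂.append p).IsPath := by
      have h1 : ((q₁.append q₂).append p).IsCycle := by
        rw [hsq]; exact cycle_append_comm hcyc
      rw [← Walk.append_assoc] at h1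
      exact path_of_cycle_append_left (fun h => h23 h.symm) (cycle_append_comm h1)
    have hlsq : q₁.length + q₂.length = q.length := by
      have h := congrArg Walk.length hsq
      rw [Walk.length_append] at h
      exact h
    have hq₁S : ∀ w ∈ q₁.support, w ∈ c.support :=
      fun w h => hqS w (Walk.support_takeUntil_subset _ _ h)
    have hq₂S : ∀ w ∈ q₂.support, w ∈ c.support :=
      fun w h => hqS w (Walk.support_dropUntil_subset _ _ h)
    have hq₁E : ∀ e ∈ q₁.edges, e ∈ c.edges :=
      fun e h => hqE e (Walk.edges_takeUntil_subset _ _ h)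
    have hq₂E : ∀ e ∈ q₂.edges, e ∈ c.edges :=
      fun e h => hqE e (Walk.edges_dropUntil_subset _ _ h)
    have huv₂ : s(u, v) ∈ p.edges ∨ s(u, v) ∈ q₁.edges ∨
        s(u, v) ∈ q₂.edges := by
      rcases huv₁ with h | h
      · tauto
      · rw [← hsq, Walk.edges_append, List.mem_append] at h
        tauto
    exact key h5 h7 hT c h11 hxu hxv hx hy hyx h12 h13 h23
      hyz₁ hyz₂ hyz₃ p q₁ q₂ hpP hq₁ hq₂ hAB hBC hCA (by omega)
      hpS hq₁S hq₂S hpE hq₁E hq₂E huv₂
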